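/- Let q be an odd prime. Then Σ_{r=1}^{(q−1)/2} {r²/q} = (q−1)/4 + (1/(2q))·Σ_{n=1}^{q−1} n·(n/q), where {x} denotes the fractional part of x and (n/q) is the Legendre symbol. -/

import Mathlib

/-- For an odd prime `q`, `Σ_{r=1}^{(q−1)/2} {r²/q} = (q−1)/4 + (1/(2q))·Σ_{n=1}^{q−1} n·(n/q)`,
where `{x}` is the fractional part and `(n/q)` the Legendre symbol. -/
theorem sum_fract_sq_eq (q : ℕ) [Fact q.Prime] (hodd : q ≠ 2) :
    ∑ r ∈ Finset.Icc 1 ((q - 1) / 2), Int.fract ((r : ℝ) ^ 2 / q) =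
      ((q : ℝ) - 1) / 4 +
        (1 / (2 * q)) * ∑ n ∈ Finset.Icc 1 (q - 1), (n : ℝ) * (legendreSym q n : ℝ) := by
  classical
  have hq : q.Prime := Fact.out
  have hq2 : 2 < q := lt_of_le_of_ne hq.two_le (Ne.symm hodd)
  have hqodd : q % 2 = 1 := Nat.odd_iff.mp (hq.odd_of_ne_two hodd)
  have hqpos : 0 < q := hq.pos
  have hqR : (0:ℝ) < q := by exact_mod_cast hqpos
  have hqR0 : (q:ℝ) ≠ 0 := ne_of_gt hqR
  set m := (q - 1) / 2 with hm
  have h2m : 2 * m + 1 = q := by omega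
  set T : Finset ℕ := (Finset.Icc 1 (q-1)).filter (fun n : ℕ => legendreSym q (n:ℤ) = 1)
    with hT
  set T' : Finset ℕ := (Finset.Icc 1 (q-1)).filter (fun n : ℕ => ¬ legendreSym q (n:ℤ) = 1)
    with hT'
  have hcast_ne : ∀ n : ℕ, 1 ≤ n → n ≤ q - 1 → ((n : ℤ) : ZMod q) ≠ 0 := by
    intro n h1 h2 h
    rw [Int.cast_natCast, ZMod.natCast_eq_zero_iff] at h
    have := Nat.le_of_dvd (by omega) h
    omega
  -- Step 1 : LHS = (∑ n in T, n)/q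
  have step1 : ∑ r ∈ Finset.Icc 1 m, Int.fract ((r : ℝ) ^ 2 / q)
      = (∑ n ∈ T, (n:ℝ)) / q := by
    rw [Finset.sum_div]
    refine Finset.sum_nbij (fun r : ℕ => r ^ 2 % q) ?_ ?_ ?_ ?_
    · -- maps to
      intro r hr
      simp only [Finset.mem_Icc] at hr
      have hrq : ¬ q ∣ r := fun h => by have := Nat.le_of_dvd (by omega) h; omega
      have hne : ((r:ℤ) : ZMod q) ≠ 0 := by
        rw [Int.cast_natCast, Ne, ZMod.natCast_eq_zero_iff]; exact hrq
      have hmodlt : r ^ 2 % q < q := Nat.mod_lt _ hqpos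
      have hmodpos : 0 < r ^ 2 % q := by
        rcases Nat.eq_zero_or_pos (r ^ 2 % q) with h | h
        · exact absurd (hq.dvd_of_dvd_pow ((Nat.dvd_iff_mod_eq_zero).mpr h)) hrq
        · exact h
      have hleg : legendreSym q ((r ^ 2 % q : ℕ) : ℤ) = 1 := by
        have h1 : ((r ^ 2 % q : ℕ) : ℤ) = ((r:ℤ) ^ 2) % (q : ℤ) := by push_cast; ring
        rw [h1, ← legendreSym.mod]
        calc legendreSym q ((r:ℤ) ^ 2) = legendreSym q (r:ℤ) ^ 2 := by
              rw [pow_two, pow_two, legendreSym.mul]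
          _ = 1 := legendreSym.sq_one q hne
      simp only [hT, Finset.mem_filter, Finset.mem_Icc]
      exact ⟨⟨hmodpos, by omega⟩, hleg⟩
    · -- injective
      intro r hr s hs hrs
      simp only [Finset.coe_Icc, Set.mem_Icc] at hr hs
      dsimp only at hrs
      have hz : ((r : ZMod q)) ^ 2 = ((s : ZMod q)) ^ 2 := by
        have h : ((r ^ 2 % q : ℕ) : ZMod q) = ((s ^ 2 % q : ℕ) : ZMod q) := by rw [hrs]
        simpa [Nat.cast_pow, ZMod.natCast_mod] using h
      have hfac : ((r : ZMod q) - s) * ((r : ZMod q) + s) = 0 := by linear_combination hz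
      rcases mul_eq_zero.mp hfac with h | h
      · have h' : (r : ZMod q) = s := by linear_combination h
        have := (ZMod.natCast_eq_natCast_iff r s q).mp h'
        unfold Nat.ModEq at this
        have hr' : r % q = r := Nat.mod_eq_of_lt (by omega)
        have hs' : s % q = s := Nat.mod_eq_of_lt (by omega)
        omega
      · have h' : ((r + s : ℕ) : ZMod q) = 0 := by push_cast; linear_combination h
        rw [ZMod.natCast_eq_zero_iff] at h'
        have := Nat.le_of_dvd (by omega) h'
        omega
    · -- surjective
      intro n hn
      simp only [hT, Finset.coe_filter, Finset.mem_Icc, Set.mem_setOf_eq] at hn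
      obtain ⟨⟨hn1, hn2⟩, hnleg⟩ := hn
      have hne : ((n:ℤ) : ZMod q) ≠ 0 := hcast_ne n hn1 hn2
      obtain ⟨y, hy⟩ := (legendreSym.eq_one_iff q hne).mp hnleg
      have hy' : (n : ZMod q) = y * y := by rw [← hy]; push_cast; ring
      have hy0 : y ≠ 0 := by
        intro h; rw [h, mul_zero] at hy'
        apply hne; rw [Int.cast_natCast, hy']
      haveI : NeZero q := ⟨by omega⟩
      have hvlt : y.val < q := ZMod.val_lt y
      have hv0 : y.val ≠ 0 := fun h => hy0 (by rwa [ZMod.val_eq_zero] at h)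
      have hyval : ((y.val : ℕ) : ZMod q) = y := by
        simp [ZMod.natCast_val, ZMod.cast_id]
      set r : ℕ := if y.val ≤ m then y.val else q - y.val with hrdef
      have hrmem : 1 ≤ r ∧ r ≤ m := by
        rw [hrdef]; split <;> omega
      have hrz : ((r : ZMod q)) ^ 2 = (n : ZMod q) := by
        rw [hrdef]; split
        · rw [hyval, hy', pow_two]
        · have hneg : ((q - y.val : ℕ) : ZMod q) = -y := by
            rw [Nat.cast_sub (le_of_lt hvlt), ZMod.natCast_self, hyval, zero_sub]
          rw [hneg, hy']; ring
      refine Set.mem_image .. |>.mpr ⟨r, ?_, ?_⟩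
      · simp only [Finset.coe_Icc, Set.mem_Icc]; exact hrmem
      · show r ^ 2 % q = n
        have h1 : ((r ^ 2 : ℕ) : ZMod q) = ((n : ℕ) : ZMod q) := by push_cast; rw [hrz]
        have h2 := (ZMod.natCast_eq_natCast_iff _ _ _).mp h1
        unfold Nat.ModEq at h2
        have hn' : n % q = n := Nat.mod_eq_of_lt (by omega)
        omega
    · -- values
      intro r hr
      show Int.fract ((r : ℝ) ^ 2 / q) = ((r ^ 2 % q : ℕ) : ℝ) / q
      have hdm : q * (r ^ 2 / q) + r ^ 2 % q = r ^ 2 := Nat.div_add_mod _ _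
      have h1 : (q:ℝ) * ((r ^ 2 / q : ℕ):ℝ) + ((r ^ 2 % q : ℕ):ℝ) = (r:ℝ) ^ 2 := by
        exact_mod_cast hdm
      have h2 : (r:ℝ) ^ 2 / q = ((r ^ 2 / q : ℕ):ℝ) + ((r ^ 2 % q : ℕ):ℝ) / q := by
        rw [← h1]; field_simp
      rw [h2, Int.fract_natCast_add]
      refine Int.fract_eq_self.mpr ⟨by positivity, ?_⟩
      rw [div_lt_one hqR]
      exact_mod_cast Nat.mod_lt _ hqpos
  -- Step 2 : split the Legendre sum
  have hTval : ∑ n ∈ T, (n:ℝ) * (legendreSym q n : ℝ) = ∑ n ∈ T, (n:ℝ) := by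
    refine Finset.sum_congr rfl fun n hn => ?_
    simp only [hT, Finset.mem_filter] at hn
    rw [hn.2]; norm_num
  have hT'val : ∑ n ∈ T', (n:ℝ) * (legendreSym q n : ℝ) = -∑ n ∈ T', (n:ℝ) := by
    rw [← Finset.sum_neg_distrib]
    refine Finset.sum_congr rfl fun n hn => ?_
    simp only [hT', Finset.mem_filter, Finset.mem_Icc] at hn
    have hne := hcast_ne n hn.1.1 hn.1.2
    rcases legendreSym.eq_one_or_neg_one q hne with h | h
    · exact absurd h hn.2
    · rw [h]; norm_num
  have hsplit : ∑ n ∈ T, (n:ℝ) * (legendreSym q n : ℝ)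
      + ∑ n ∈ T', (n:ℝ) * (legendreSym q n : ℝ)
      = ∑ n ∈ Finset.Icc 1 (q-1), (n:ℝ) * (legendreSym q n : ℝ) :=
    Finset.sum_filter_add_sum_filter_not _ _ _
  have hsplit' : (∑ n ∈ T, (n:ℝ)) + ∑ n ∈ T', (n:ℝ)
      = ∑ n ∈ Finset.Icc 1 (q-1), (n:ℝ) :=
    Finset.sum_filter_add_sum_filter_not _ _ _
  -- Gauss sum
  have hGauss : (∑ n ∈ T, (n:ℝ)) + ∑ n ∈ T', (n:ℝ) = (q:ℝ) * ((q:ℝ) - 1) / 2 := by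
    rw [hsplit']
    have hins : Finset.range q = insert 0 (Finset.Icc 1 (q-1)) := by
      ext x; simp only [Finset.mem_range, Finset.mem_insert, Finset.mem_Icc]; omega
    have h0 : (0:ℕ) ∉ Finset.Icc 1 (q-1) := by simp
    have hrg : ∑ n ∈ Finset.Icc 1 (q-1), (n:ℝ) = ∑ n ∈ Finset.range q, (n:ℝ) := by
      rw [hins, Finset.sum_insert h0, Nat.cast_zero, zero_add]
    have hg := Finset.sum_range_id_mul_two q
    have hgR := congrArg (Nat.cast : ℕ → ℝ) hg
    push_cast [Nat.cast_sub (by omega : 1 ≤ q)] at hgR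
    rw [hrg]
    linarith
  rw [step1, ← hsplit, hTval, hT'val]
  field_simp
  linear_combination 4 * hGauss
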